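/- For a GARK method applied to the antisymmetric test problem y' = [[0, η],[−η, 0]] y, the stability matrix equals R₂(w) = [[1 − w² b_fᵀ A^{fs} d_s, w b_fᵀ d_f],[−w b_sᵀ d_s, 1 − w² b_sᵀ A^{sf} d_f]], where w = Hη, d_f = (I + w² A^{fs} A^{sf})⁻¹ 𝟙, d_s = (I + w² A^{sf} A^{fs})⁻¹ 𝟙, provided the inverses exist. That is, I₂ + w · diag(b_fᵀ, b_sᵀ) · [[I, −w A^{fs}],[w A^{sf}, I]]⁻¹ · [[0, 𝟙],[−𝟙, 0]] equals the stated 2×2 matrix. -/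

import Mathlib

open Matrix

namespace Stmt9

variable {sf ss : ℕ}

/-- `diag(b_fᵀ, b_sᵀ)`. -/
def Bmat (bf : Fin sf → ℝ) (bs : Fin ss → ℝ) : Matrix (Fin 2) (Fin sf ⊕ Fin ss) ℝ :=
  Matrix.of fun i => Sum.elim (fun j => if i = 0 then bf j else 0)
    (fun j => if i = 1 then bs j else 0)

/-- The matrix `[[0, 𝟙],[−𝟙, 0]]`. -/
def Wmat : Matrix (Fin sf ⊕ Fin ss) (Fin 2) ℝ :=
  Matrix.of fun i j => Sum.elim (fun _ => if j = 1 then (1 : ℝ) else 0)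
    (fun _ => if j = 0 then (-1 : ℝ) else 0) i

theorem blockInv (Afs : Matrix (Fin sf) (Fin ss) ℝ) (Asf : Matrix (Fin ss) (Fin sf) ℝ) (w : ℝ)
    (h1 : IsUnit ((1 + (w ^ 2) • (Afs * Asf)) : Matrix (Fin sf) (Fin sf) ℝ).det)
    (h2 : IsUnit ((1 + (w ^ 2) • (Asf * Afs)) : Matrix (Fin ss) (Fin ss) ℝ).det) :
    (Matrix.fromBlocks (1 : Matrix (Fin sf) (Fin sf) ℝ) (-(w • Afs)) (w • Asf) 1)⁻¹ =
      Matrix.fromBlocks (1 + (w ^ 2) • (Afs * Asf))⁻¹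
        (w • (Afs * (1 + (w ^ 2) • (Asf * Afs))⁻¹))
        (-(w • (Asf * (1 + (w ^ 2) • (Afs * Asf))⁻¹)))
        (1 + (w ^ 2) • (Asf * Afs))⁻¹ := by
  set S : Matrix (Fin sf) (Fin sf) ℝ := 1 + (w ^ 2) • (Afs * Asf) with hS
  set T : Matrix (Fin ss) (Fin ss) ℝ := 1 + (w ^ 2) • (Asf * Afs) with hT
  have hST : Afs * T = S * Afs := by
    simp [hS, hT, Matrix.mul_add, Matrix.add_mul, Matrix.mul_smul, Matrix.smul_mul,
      Matrix.mul_assoc]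
  have hTS : Asf * S = T * Asf := by
    simp [hS, hT, Matrix.mul_add, Matrix.add_mul, Matrix.mul_smul, Matrix.smul_mul,
      Matrix.mul_assoc]
  have key1 : S⁻¹ * Afs = Afs * T⁻¹ := by
    calc S⁻¹ * Afs = S⁻¹ * (Afs * T) * T⁻¹ := by
          rw [Matrix.mul_assoc S⁻¹, Matrix.mul_assoc Afs, Matrix.mul_nonsing_inv _ h2,
            Matrix.mul_one]
      _ = Afs * T⁻¹ := by
          rw [hST, ← Matrix.mul_assoc, Matrix.nonsing_inv_mul _ h1, Matrix.one_mul]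
  have key2 : T⁻¹ * Asf = Asf * S⁻¹ := by
    calc T⁻¹ * Asf = T⁻¹ * (Asf * S) * S⁻¹ := by
          rw [Matrix.mul_assoc T⁻¹, Matrix.mul_assoc Asf, Matrix.mul_nonsing_inv _ h1,
            Matrix.mul_one]
      _ = Asf * S⁻¹ := by
          rw [hTS, ← Matrix.mul_assoc, Matrix.nonsing_inv_mul _ h2, Matrix.one_mul]
  have hTT : Asf * Afs * T = T * (Asf * Afs) := by
    simp [hT, Matrix.mul_add, Matrix.add_mul, Matrix.mul_smul, Matrix.smul_mul,
      Matrix.mul_assoc]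
  have key3 : T⁻¹ * (Asf * Afs) = Asf * Afs * T⁻¹ := by
    calc T⁻¹ * (Asf * Afs) = T⁻¹ * (Asf * Afs * T) * T⁻¹ := by
          rw [Matrix.mul_assoc T⁻¹, Matrix.mul_assoc (Asf * Afs), Matrix.mul_nonsing_inv _ h2,
            Matrix.mul_one]
      _ = Asf * Afs * T⁻¹ := by
          rw [hTT, ← Matrix.mul_assoc, Matrix.nonsing_inv_mul _ h2, Matrix.one_mul]
  rw [← key2]
  apply Matrix.inv_eq_right_inv
  rw [Matrix.fromBlocks_multiply, ← Matrix.fromBlocks_one]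
  rw [Matrix.fromBlocks_inj]
  refine ⟨?_, ?_, ?_, ?_⟩
  · rw [Matrix.one_mul, Matrix.neg_mul, Matrix.mul_neg, neg_neg, Matrix.smul_mul,
      Matrix.mul_smul, smul_smul, ← pow_two, ← Matrix.mul_assoc, ← key1, Matrix.mul_assoc]
    calc S⁻¹ + w ^ 2 • (S⁻¹ * (Afs * Asf)) = S⁻¹ * (1 + w ^ 2 • (Afs * Asf)) := by
          rw [Matrix.mul_add, Matrix.mul_one, Matrix.mul_smul]
      _ = 1 := by rw [← hS, Matrix.nonsing_inv_mul _ h1]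
  · rw [Matrix.one_mul, Matrix.neg_mul, Matrix.smul_mul]
    simp
  · rw [Matrix.one_mul, key2, Matrix.smul_mul]
    simp
  · rw [Matrix.one_mul, Matrix.smul_mul, Matrix.mul_smul, smul_smul, ← pow_two,
      ← Matrix.mul_assoc, ← key3]
    calc w ^ 2 • (T⁻¹ * (Asf * Afs)) + T⁻¹ = T⁻¹ * (1 + w ^ 2 • (Asf * Afs)) := by
          rw [Matrix.mul_add, Matrix.mul_one, Matrix.mul_smul, add_comm]
      _ = 1 := by rw [← hT, Matrix.nonsing_inv_mul _ h2]

/-- Stability matrix of a GARK method on the antisymmetric test problem: the explicit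
2×2 form in terms of `d_f` and `d_s`. -/
theorem stmt_9 (bf : Fin sf → ℝ) (bs : Fin ss → ℝ)
    (Afs : Matrix (Fin sf) (Fin ss) ℝ) (Asf : Matrix (Fin ss) (Fin sf) ℝ) (w : ℝ)
    (h1 : IsUnit ((1 + (w ^ 2) • (Afs * Asf)) : Matrix (Fin sf) (Fin sf) ℝ).det)
    (h2 : IsUnit ((1 + (w ^ 2) • (Asf * Afs)) : Matrix (Fin ss) (Fin ss) ℝ).det) :
    let df : Fin sf → ℝ := (1 + (w ^ 2) • (Afs * Asf))⁻¹ *ᵥ fun _ => 1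
    let ds : Fin ss → ℝ := (1 + (w ^ 2) • (Asf * Afs))⁻¹ *ᵥ fun _ => 1
    (1 : Matrix (Fin 2) (Fin 2) ℝ) +
        w • (Bmat bf bs * (Matrix.fromBlocks 1 (-(w • Afs)) (w • Asf) 1)⁻¹ * Wmat) =
      !![1 - w ^ 2 * (bf ⬝ᵥ (Afs *ᵥ ds)), w * (bf ⬝ᵥ df);
         -(w * (bs ⬝ᵥ ds)), 1 - w ^ 2 * (bs ⬝ᵥ (Asf *ᵥ df))] := by
  intro df ds
  change (1 : Matrix (Fin 2) (Fin 2) ℝ) +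
      w • (Bmat bf bs * (Matrix.fromBlocks 1 (-(w • Afs)) (w • Asf) 1)⁻¹ * @Wmat sf ss) = _
  rw [blockInv Afs Asf w h1 h2]
  ext i j
  fin_cases i <;> fin_cases j <;>
    simp [Bmat, Wmat, df, ds, Matrix.mul_apply, Matrix.fromBlocks, Matrix.one_apply,
      Fintype.sum_sum_type, dotProduct, Matrix.mulVec, Finset.mul_sum, Finset.sum_mul,
      mul_comm, mul_left_comm, mul_assoc]
  · rw [sub_eq_add_neg]
    congr 1
    congr 1
    rw [Finset.sum_comm]
    refine Finset.sum_congr rfl fun a _ => ?_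
    rw [Finset.sum_comm]
    exact Finset.sum_congr rfl fun b _ => Finset.sum_congr rfl fun c _ => by ring
  · rw [Finset.sum_comm]
  · rw [Finset.sum_comm]
  · rw [sub_eq_add_neg]
    congr 1
    congr 1
    rw [Finset.sum_comm]
    refine Finset.sum_congr rfl fun a _ => ?_
    rw [Finset.sum_comm]
    exact Finset.sum_congr rfl fun b _ => Finset.sum_congr rfl fun c _ => by ring


end Stmt9
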